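/- Let f = f(t,x,v) be integrable with v f(t,x,·) integrable on ℝ for x ∈ {0,1}, satisfying the boundary conditions f(t,0,v) = k₀₀ f(t,0,−v) + k₁₀ f(t,1,v) for v > 0 and f(t,1,v) = k₀₁ f(t,0,v) + k₁₁ f(t,1,−v) for v < 0. If k₀₀ + k₀₁ = 1 and k₁₀ + k₁₁ = 1, then the boundary fluxes coincide: u(t,1) = u(t,0), where u(t,x) = ∫_ℝ v f(t,x,v) dv. -/
import Mathlib


open MeasureTheory Real Set

/-- Lemma `lemma: bdy for u` of the paper: if the feedback matrix
satisfies `k₀₀ + k₀₁ = 1` and `k₁₀ + k₁₁ = 1`, the boundary fluxes coincide: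
`u(t,1) = u(t,0)`, where `u(t,x) = ∫_ℝ v f(t,x,v) dv`. -/
theorem stmt8
    (f : ℝ → ℝ → ℝ → ℝ) (k00 k01 k10 k11 t : ℝ)
    (hintf0 : Integrable (fun v : ℝ => f t 0 v))
    (hintf1 : Integrable (fun v : ℝ => f t 1 v))
    (hint0 : Integrable (fun v : ℝ => v * f t 0 v))
    (hint1 : Integrable (fun v : ℝ => v * f t 1 v))
    (hbc0 : ∀ v > (0:ℝ), f t 0 v = k00 * f t 0 (-v) + k10 * f t 1 v)
    (hbc1 : ∀ v < (0:ℝ), f t 1 v = k01 * f t 0 v + k11 * f t 1 (-v))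
    (hk1 : k00 + k01 = 1) (hk2 : k10 + k11 = 1) :
    (∫ v : ℝ, v * f t 1 v) = ∫ v : ℝ, v * f t 0 v := by
  -- integrability of the reflected integrands
  have g0 : Integrable (fun v : ℝ => -v * f t 0 v) := by
    have h : (fun v : ℝ => -v * f t 0 v) = fun v => -(v * f t 0 v) := by funext v; ring
    rw [h]; exact hint0.neg
  have g1 : Integrable (fun v : ℝ => -v * f t 1 v) := by
    have h : (fun v : ℝ => -v * f t 1 v) = fun v => -(v * f t 1 v) := by funext v; ring
    rw [h]; exact hint1.neg
  have h0n : Integrable (fun v : ℝ => v * f t 0 (-v)) := by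
    simpa using g0.comp_neg
  have h1n : Integrable (fun v : ℝ => v * f t 1 (-v)) := by
    simpa using g1.comp_neg
  -- reflection identities
  have neg0 : (∫ v in Ioi (0:ℝ), v * f t 0 (-v)) = - ∫ v in Iic (0:ℝ), v * f t 0 v := by
    have h := integral_comp_neg_Ioi (0:ℝ) (fun v => -v * f t 0 v)
    simp only [neg_neg, neg_zero] at h
    rw [h, ← integral_neg]
    simp [neg_mul]
  have neg1 : (∫ v in Iic (0:ℝ), v * f t 1 (-v)) = - ∫ v in Ioi (0:ℝ), v * f t 1 v := by
    have h := integral_comp_neg_Iic (0:ℝ) (fun v => -v * f t 1 v)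
    simp only [neg_neg, neg_zero] at h
    rw [h, ← integral_neg]
    simp [neg_mul]
  -- boundary condition on Ioi 0 for x = 0
  have e0 : (∫ v in Ioi (0:ℝ), v * f t 0 v)
      = k00 * (∫ v in Ioi (0:ℝ), v * f t 0 (-v)) + k10 * ∫ v in Ioi (0:ℝ), v * f t 1 v := by
    rw [← integral_const_mul, ← integral_const_mul,
      ← integral_add ((h0n.integrableOn).const_mul k00) ((hint1.integrableOn).const_mul k10)]
    refine setIntegral_congr_fun measurableSet_Ioi (fun v hv => ?_)
    rw [hbc0 v hv]; ring
  -- boundary condition on Iic 0 for x = 1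
  have e1 : (∫ v in Iic (0:ℝ), v * f t 1 v)
      = k01 * (∫ v in Iic (0:ℝ), v * f t 0 v) + k11 * ∫ v in Iic (0:ℝ), v * f t 1 (-v) := by
    rw [← integral_const_mul, ← integral_const_mul,
      ← integral_add ((hint0.integrableOn).const_mul k01) ((h1n.integrableOn).const_mul k11)]
    refine setIntegral_congr_fun measurableSet_Iic (fun v hv => ?_)
    rcases lt_or_eq_of_le (mem_Iic.mp hv) with h | h
    · rw [hbc1 v h]; ring
    · subst h; ring
  -- split the full integrals
  have s0 : (∫ v in Iic (0:ℝ), v * f t 0 v) + (∫ v in Ioi (0:ℝ), v * f t 0 v)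
      = ∫ v : ℝ, v * f t 0 v := intervalIntegral.integral_Iic_add_Ioi hint0.integrableOn hint0.integrableOn
  have s1 : (∫ v in Iic (0:ℝ), v * f t 1 v) + (∫ v in Ioi (0:ℝ), v * f t 1 v)
      = ∫ v : ℝ, v * f t 1 v := intervalIntegral.integral_Iic_add_Ioi hint1.integrableOn hint1.integrableOn
  set A := ∫ v in Iic (0:ℝ), v * f t 0 v
  set B := ∫ v in Ioi (0:ℝ), v * f t 1 v
  rw [neg0] at e0
  rw [neg1] at e1
  rw [← s0, ← s1, e0, e1]
  linear_combination A * hk1 - B * hk2
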